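/- Let 𝔉 be a hereditary formation, G a finite group, and N a normal subgroup of G with N ≤ Z_𝔉(G). Then Z_𝔉(G)/N = Z_𝔉(G/N). -/

import Mathlib

/-- A class of finite groups. -/
def GroupClass : Type 1 :=
  ∀ (G : Type) [Group G] [Finite G], Prop

instance SemidirectProduct.instFinite {N G : Type*} [Group N] [Group G] [Finite N] [Finite G]
    (φ : G →* MulAut N) : Finite (N ⋊[φ] G) :=
  Finite.of_injective (fun x => (x.left, x.right)) (by
    rintro ⟨a, b⟩ ⟨c, d⟩ h
    simpa [Prod.ext_iff, SemidirectProduct.ext_iff] using h)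

/-- The `F`-residual of a finite group `G`. -/
def GroupClass.residual (F : GroupClass) (G : Type) [Group G] [Finite G] : Subgroup G :=
  sInf {N : Subgroup G | ∃ _ : N.Normal, F (G ⧸ N)}

/-- `F` is a formation. -/
structure GroupClass.IsFormation (F : GroupClass) : Prop where
  nonempty : ∃ (G : Type) (_ : Group G) (_ : Finite G), F G
  isoClosed : ∀ (G H : Type) [Group G] [Finite G] [Group H] [Finite H],
    (G ≃* H) → F G → F H
  quot_residual_mem : ∀ (G : Type) [Group G] [Finite G] (N : Subgroup G) (_ : N.Normal),
    F.residual G ≤ N → F (G ⧸ N)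

/-- `F` is hereditary (subgroup-closed). -/
def GroupClass.Hereditary (F : GroupClass) : Prop :=
  ∀ (G : Type) [Group G] [Finite G], F G → ∀ H : Subgroup G, F H

/-- `F` is saturated. -/
def GroupClass.Saturated (F : GroupClass) : Prop :=
  ∀ (G : Type) [Group G] [Finite G], F.residual G ≤ frattini G → F G

section SectionMachinery

variable {G : Type} [Group G]

/-- conjugation by `g` preserves `S.subgroupOf R` when `R, S` are normal. -/
theorem conj_map_subgroupOf (R S : Subgroup G) [hR : R.Normal] [hS : S.Normal] (g : G) :
    (S.subgroupOf R).map ((MulAut.conjNormal g : MulAut R) : R →* R) = S.subgroupOf R := by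
  ext x
  simp only [Subgroup.mem_map, Subgroup.mem_subgroupOf]
  constructor
  · rintro ⟨y, hy, rfl⟩
    simpa [MulAut.conjNormal_apply] using hS.conj_mem _ hy g
  · intro hx
    refine ⟨(MulAut.conjNormal g).symm x, ?_, by simp⟩
    simp only [Subgroup.mem_subgroupOf, MulAut.conjNormal_symm_apply]
    simpa using hS.conj_mem _ hx g⁻¹

/-- The conjugation action of `G` on the normal section `R/S`. -/
def secAction (R S : Subgroup G) [R.Normal] [S.Normal] :
    G →* MulAut (R ⧸ S.subgroupOf R) where
  toFun g := QuotientGroup.congr (S.subgroupOf R) (S.subgroupOf R)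
      (MulAut.conjNormal g) (conj_map_subgroupOf R S g)
  map_one' := by
    ext x
    induction x using QuotientGroup.induction_on with
    | H r => simp [QuotientGroup.congr_mk]
  map_mul' g₁ g₂ := by
    ext x
    induction x using QuotientGroup.induction_on with
    | H r => simp [QuotientGroup.congr_mk, map_mul]

/-- The centraliser in `G` of the normal section `R/S`. -/
def secCentralizer (R S : Subgroup G) [R.Normal] [S.Normal] : Subgroup G :=
  (secAction R S).ker

instance secCentralizer.normal (R S : Subgroup G) [R.Normal] [S.Normal] :
    (secCentralizer R S).Normal := MonoidHom.normal_ker _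

/-- The semidirect product `[R/S](G/K)` for a normal subgroup `K ≤ C_G(R/S)`. -/
abbrev secSDP (R S K : Subgroup G) [R.Normal] [S.Normal] [K.Normal]
    (hK : K ≤ secCentralizer R S) : Type :=
  (R ⧸ S.subgroupOf R) ⋊[QuotientGroup.lift K (secAction R S) (fun _ hx => hK hx)] (G ⧸ K)

end SectionMachinery

/-- The normal section `R/S` of `G` is `F`-central in `G`. -/
def FCentralSection (F : GroupClass) {G : Type} [Group G] [Finite G]
    (R S : Subgroup G) [R.Normal] [S.Normal] : Prop :=
  ∃ (K : Subgroup G) (hK : K.Normal),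
    haveI := hK
    ∃ hle : K ≤ secCentralizer R S, F (secSDP R S K hle)

/-- `H/K` is a chief factor of `G`. -/
def IsChiefFactor {G : Type} [Group G] (H K : Subgroup G) : Prop :=
  H.Normal ∧ K.Normal ∧ K < H ∧
    ∀ L : Subgroup G, L.Normal → K ≤ L → L ≤ H → L = K ∨ L = H

/-- A normal subgroup `N` of `G` is `F`-hypercentral in `G`:
every chief factor of `G` below `N` is `F`-central in `G`. -/
def FHypercentralIn (F : GroupClass) {G : Type} [Group G] [Finite G] (N : Subgroup G) : Prop :=
  N.Normal ∧ ∀ H K : Subgroup G, ∀ hcf : IsChiefFactor H K, H ≤ N →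
    @FCentralSection F G _ _ H K hcf.1 hcf.2.1

/-- The `F`-hypercentre of `G`: the product of all `F`-hypercentral normal subgroups. -/
def FHypercentre (F : GroupClass) (G : Type) [Group G] [Finite G] : Subgroup G :=
  ⨆ (N : Subgroup G) (_ : FHypercentralIn F N), N

/-- `A` is `K`-`F`-subnormal in `G`. -/
def KFSubnormalIn (F : GroupClass) {G : Type} [Group G] [Finite G] (A : Subgroup G) : Prop :=
  ∃ (n : ℕ) (c : ℕ → Subgroup G), c 0 = A ∧ c n = ⊤ ∧
    ∀ i < n, c i ≤ c (i + 1) ∧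
      (((c i).subgroupOf (c (i + 1))).Normal ∨
        F ((c (i + 1)) ⧸ ((c i).subgroupOf (c (i + 1))).normalCore))

/-! ### Auxiliary development -/

section FormationBasics

theorem GroupClass.IsFormation.quot {F : GroupClass} (hF : F.IsFormation)
    {G : Type} [Group G] [Finite G] (h : F G) (N : Subgroup G) [N.Normal] : F (G ⧸ N) := by
  refine hF.quot_residual_mem G N ‹_› (le_trans ?_ bot_le)
  exact sInf_le ⟨inferInstance, hF.isoClosed G _ (QuotientGroup.quotientBot (G := G)).symm h⟩

theorem GroupClass.IsFormation.of_surjective {F : GroupClass} (hF : F.IsFormation)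
    {G H : Type} [Group G] [Finite G] [Group H] [Finite H] (f : G →* H)
    (hf : Function.Surjective f) (h : F G) : F H :=
  hF.isoClosed _ _ (QuotientGroup.quotientKerEquivOfSurjective f hf) (hF.quot h f.ker)

end FormationBasics

section SDPHom

/-- A homomorphism of semidirect products from compatible homomorphisms of the pieces. -/
def sdpHom {Q₁ P₁ Q₂ P₂ : Type} [Group Q₁] [Group P₁] [Group Q₂] [Group P₂]
    {φ₁ : P₁ →* MulAut Q₁} {φ₂ : P₂ →* MulAut Q₂} (e : Q₁ →* Q₂) (f : P₁ →* P₂)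
    (h : ∀ p q, e (φ₁ p q) = φ₂ (f p) (e q)) : Q₁ ⋊[φ₁] P₁ →* Q₂ ⋊[φ₂] P₂ where
  toFun x := ⟨e x.left, f x.right⟩
  map_one' := by ext <;> simp
  map_mul' x y := by ext <;> simp [h]

theorem sdpHom_surjective {Q₁ P₁ Q₂ P₂ : Type} [Group Q₁] [Group P₁] [Group Q₂] [Group P₂]
    {φ₁ : P₁ →* MulAut Q₁} {φ₂ : P₂ →* MulAut Q₂} (e : Q₁ →* Q₂) (f : P₁ →* P₂)
    (h : ∀ p q, e (φ₁ p q) = φ₂ (f p) (e q)) (he : Function.Surjective e)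
    (hf : Function.Surjective f) : Function.Surjective (sdpHom e f h) := by
  rintro ⟨q, p⟩
  obtain ⟨q₁, rfl⟩ := he q
  obtain ⟨p₁, rfl⟩ := hf p
  exact ⟨⟨q₁, p₁⟩, rfl⟩

end SDPHom

section SectionLemmas

variable {G G' : Type} [Group G] [Group G']

theorem secAction_mk (R S : Subgroup G) [R.Normal] [S.Normal] (g : G) (r : R) :
    secAction R S g (QuotientGroup.mk r) = QuotientGroup.mk (MulAut.conjNormal g r) :=
  QuotientGroup.congr_mk _ _ _ (conj_map_subgroupOf R S g) r

theorem mem_secCentralizer_iff {R S : Subgroup G} [R.Normal] [S.Normal] {g : G} :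
    g ∈ secCentralizer R S ↔ ∀ x : R ⧸ S.subgroupOf R, secAction R S g x = x := by
  rw [secCentralizer, MonoidHom.mem_ker]
  constructor
  · intro h x; rw [h]; rfl
  · intro h; exact MulEquiv.toMonoidHom_injective (MonoidHom.ext h)

theorem sec_le_centralizer (R S : Subgroup G) [R.Normal] [hS : S.Normal] :
    S ≤ secCentralizer R S := by
  intro s hs
  rw [mem_secCentralizer_iff]
  intro x
  induction x using QuotientGroup.induction_on with
  | H r =>
    rw [secAction_mk, QuotientGroup.eq]
    simp only [Subgroup.mem_subgroupOf, Subgroup.coe_mul, InvMemClass.coe_inv,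
      MulAut.conjNormal_apply]
    have h1 : (↑r)⁻¹ * s⁻¹ * ((↑r : G)⁻¹)⁻¹ ∈ S := hS.conj_mem _ (inv_mem hs) _
    have := mul_mem hs h1
    convert this using 1
    group

/-- The basic homomorphism between sections along `π`. -/
def secMap (π : G →* G') (R : Subgroup G) (R' S' : Subgroup G') [R'.Normal] [S'.Normal]
    (h1 : ∀ r ∈ R, π r ∈ R') : R →* R' ⧸ S'.subgroupOf R' where
  toFun r := QuotientGroup.mk ⟨π r, h1 r r.2⟩
  map_one' := by
    rw [← QuotientGroup.mk_one]
    apply congrArg QuotientGroup.mk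
    ext; simp
  map_mul' a b := by
    rw [← QuotientGroup.mk_mul]
    apply congrArg QuotientGroup.mk
    ext; simp

theorem secMap_surjective (π : G →* G') (R : Subgroup G) (R' S' : Subgroup G')
    [R'.Normal] [S'.Normal] (h1 : ∀ r ∈ R, π r ∈ R')
    (h2 : ∀ x ∈ R', ∃ r ∈ R, (π r)⁻¹ * x ∈ S') :
    Function.Surjective (secMap π R R' S' h1) := by
  intro y
  induction y using QuotientGroup.induction_on with
  | H x =>
    obtain ⟨r, hr, hrs⟩ := h2 x.1 x.2
    refine ⟨⟨r, hr⟩, ?_⟩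
    rw [secMap]
    show QuotientGroup.mk _ = _
    rw [QuotientGroup.eq]
    simpa [Subgroup.mem_subgroupOf] using hrs

theorem secMap_ker (π : G →* G') (R S : Subgroup G) (R' S' : Subgroup G')
    [R'.Normal] [S'.Normal] (h1 : ∀ r ∈ R, π r ∈ R')
    (h3 : ∀ r ∈ R, (π r ∈ S' ↔ r ∈ S)) :
    (secMap π R R' S' h1).ker = S.subgroupOf R := by
  ext r
  rw [MonoidHom.mem_ker, secMap]
  show QuotientGroup.mk _ = 1 ↔ _
  rw [QuotientGroup.eq_one_iff]
  simpa [Subgroup.mem_subgroupOf] using h3 r r.2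

end SectionLemmas

section Transfer

variable (F : GroupClass) {G G' : Type} [Group G] [Finite G] [Group G'] [Finite G']

theorem fcentral_transfer_fwd (hF : F.IsFormation) (π : G →* G') (hπ : Function.Surjective π)
    (R S : Subgroup G) (R' S' : Subgroup G') [R.Normal] [S.Normal] [R'.Normal] [S'.Normal]
    (h1 : ∀ r ∈ R, π r ∈ R') (h2 : ∀ x ∈ R', ∃ r ∈ R, (π r)⁻¹ * x ∈ S')
    (h3 : ∀ r ∈ R, (π r ∈ S' ↔ r ∈ S)) :
    FCentralSection F R S → FCentralSection F R' S' := by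
  classical
  set ψ := secMap π R R' S' h1 with hψ
  have hsurj := secMap_surjective π R R' S' h1 h2
  have hkerψ := secMap_ker π R S R' S' h1 h3
  let e : (R ⧸ S.subgroupOf R) ≃* (R' ⧸ S'.subgroupOf R') :=
    (QuotientGroup.quotientMulEquivOfEq hkerψ.symm).trans
      (QuotientGroup.quotientKerEquivOfSurjective ψ hsurj)
  have e_mk : ∀ r : R, e (QuotientGroup.mk r) = QuotientGroup.mk ⟨π r, h1 r r.2⟩ := by
    intro r
    show (QuotientGroup.quotientKerEquivOfSurjective ψ hsurj)
      ((QuotientGroup.quotientMulEquivOfEq hkerψ.symm) (QuotientGroup.mk r)) = _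
    rw [QuotientGroup.quotientMulEquivOfEq_mk]
    rfl
  have equiv : ∀ (g : G) (x : R ⧸ S.subgroupOf R),
      e (secAction R S g x) = secAction R' S' (π g) (e x) := by
    intro g x
    induction x using QuotientGroup.induction_on with
    | H r =>
      rw [secAction_mk, e_mk, e_mk, secAction_mk]
      apply congrArg QuotientGroup.mk
      ext
      simp [MulAut.conjNormal_apply]
  rintro ⟨K, hKn, hle, hsdp⟩
  haveI := hKn
  haveI hK'n : (K.map π).Normal := hKn.map π hπ
  have hle' : K.map π ≤ secCentralizer R' S' := by
    rintro _ ⟨k, hk, rfl⟩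
    rw [mem_secCentralizer_iff]
    intro y
    obtain ⟨x, rfl⟩ := e.surjective y
    rw [← equiv]
    rw [mem_secCentralizer_iff.mp (hle hk) x]
  refine ⟨K.map π, hK'n, hle', ?_⟩
  have hmapK : K ≤ (K.map π).comap π := Subgroup.le_comap_map π K
  set f : (G ⧸ K) →* (G' ⧸ K.map π) := QuotientGroup.map K (K.map π) π hmapK with hf
  have compat : ∀ (p : G ⧸ K) (q : R ⧸ S.subgroupOf R),
      e ((QuotientGroup.lift K (secAction R S) (fun _ hx => hle hx)) p q)
        = (QuotientGroup.lift (K.map π) (secAction R' S') (fun _ hx => hle' hx)) (f p) (e q) := by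
    intro p q
    induction p using QuotientGroup.induction_on with
    | H g =>
      rw [hf, QuotientGroup.map_mk]
      exact equiv g q
  have hfsurj : Function.Surjective f := by
    intro y
    induction y using QuotientGroup.induction_on with
    | H g' =>
      obtain ⟨g, rfl⟩ := hπ g'
      exact ⟨QuotientGroup.mk g, by rw [hf, QuotientGroup.map_mk]⟩
  exact hF.of_surjective (sdpHom e.toMonoidHom f compat)
    (sdpHom_surjective _ _ compat e.surjective hfsurj) hsdp

theorem fcentral_transfer_rev (hF : F.IsFormation) (π : G →* G') (hπ : Function.Surjective π)
    (R S : Subgroup G) (R' S' : Subgroup G') [R.Normal] [S.Normal] [R'.Normal] [S'.Normal]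
    (h1 : ∀ r ∈ R, π r ∈ R') (h2 : ∀ x ∈ R', ∃ r ∈ R, (π r)⁻¹ * x ∈ S')
    (h3 : ∀ r ∈ R, (π r ∈ S' ↔ r ∈ S)) :
    FCentralSection F R' S' → FCentralSection F R S := by
  classical
  set ψ := secMap π R R' S' h1 with hψ
  have hsurj := secMap_surjective π R R' S' h1 h2
  have hkerψ := secMap_ker π R S R' S' h1 h3
  let e : (R ⧸ S.subgroupOf R) ≃* (R' ⧸ S'.subgroupOf R') :=
    (QuotientGroup.quotientMulEquivOfEq hkerψ.symm).trans
      (QuotientGroup.quotientKerEquivOfSurjective ψ hsurj)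
  have e_mk : ∀ r : R, e (QuotientGroup.mk r) = QuotientGroup.mk ⟨π r, h1 r r.2⟩ := by
    intro r
    show (QuotientGroup.quotientKerEquivOfSurjective ψ hsurj)
      ((QuotientGroup.quotientMulEquivOfEq hkerψ.symm) (QuotientGroup.mk r)) = _
    rw [QuotientGroup.quotientMulEquivOfEq_mk]
    rfl
  have equiv : ∀ (g : G) (x : R ⧸ S.subgroupOf R),
      e (secAction R S g x) = secAction R' S' (π g) (e x) := by
    intro g x
    induction x using QuotientGroup.induction_on with
    | H r =>
      rw [secAction_mk, e_mk, e_mk, secAction_mk]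
      apply congrArg QuotientGroup.mk
      ext
      simp [MulAut.conjNormal_apply]
  rintro ⟨K', hK'n, hle', hsdp⟩
  haveI := hK'n
  haveI hKn : (K'.comap π).Normal := hK'n.comap π
  have hle : K'.comap π ≤ secCentralizer R S := by
    intro k hk
    rw [mem_secCentralizer_iff]
    intro x
    apply e.injective
    rw [equiv]
    exact mem_secCentralizer_iff.mp (hle' hk) (e x)
  refine ⟨K'.comap π, hKn, hle, ?_⟩
  set f : (G ⧸ K'.comap π) →* (G' ⧸ K') := QuotientGroup.map (K'.comap π) K' π le_rfl with hf
  have hfsurj : Function.Surjective f := by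
    intro y
    induction y using QuotientGroup.induction_on with
    | H g' =>
      obtain ⟨g, rfl⟩ := hπ g'
      exact ⟨QuotientGroup.mk g, by rw [hf, QuotientGroup.map_mk]⟩
  have hfinj : Function.Injective f := by
    rw [injective_iff_map_eq_one]
    intro a ha
    induction a using QuotientGroup.induction_on with
    | H g =>
      rw [hf, QuotientGroup.map_mk, QuotientGroup.eq_one_iff] at ha
      rw [QuotientGroup.eq_one_iff]
      exact ha
  let fe : (G ⧸ K'.comap π) ≃* (G' ⧸ K') := MulEquiv.ofBijective f ⟨hfinj, hfsurj⟩
  have compat_fwd : ∀ (p : G ⧸ K'.comap π) (q : R ⧸ S.subgroupOf R),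
      e ((QuotientGroup.lift (K'.comap π) (secAction R S) (fun _ hx => hle hx)) p q)
        = (QuotientGroup.lift K' (secAction R' S') (fun _ hx => hle' hx)) (fe p) (e q) := by
    intro p q
    induction p using QuotientGroup.induction_on with
    | H g =>
      have hfe : fe (QuotientGroup.mk g) = QuotientGroup.mk (π g) := by
        show f (QuotientGroup.mk g) = _
        rw [hf, QuotientGroup.map_mk]
      rw [hfe]
      exact equiv g q
  have compat : ∀ (p : G' ⧸ K') (q : R' ⧸ S'.subgroupOf R'),
      e.symm ((QuotientGroup.lift K' (secAction R' S') (fun _ hx => hle' hx)) p q)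
        = (QuotientGroup.lift (K'.comap π) (secAction R S) (fun _ hx => hle hx))
            (fe.symm p) (e.symm q) := by
    intro p q
    apply e.injective
    rw [MulEquiv.apply_symm_apply]
    rw [compat_fwd]
    rw [MulEquiv.apply_symm_apply, MulEquiv.apply_symm_apply]
  exact hF.of_surjective (sdpHom e.symm.toMonoidHom fe.symm.toMonoidHom compat)
    (sdpHom_surjective _ _ compat e.symm.surjective fe.symm.surjective) hsdp

end Transfer

section SupHelpers
open Pointwise

variable {G : Type} [Group G]

theorem subgroup_mem_sup_normal {A B : Subgroup G} [B.Normal] {x : G} (hx : x ∈ A ⊔ B) :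
    ∃ a ∈ A, ∃ b ∈ B, a * b = x := by
  have : x ∈ ((A : Set G) * (B : Set G)) := by rw [← Subgroup.mul_normal A B]; exact hx
  simpa [Set.mem_mul] using this

/-- Dedekind's modular law, membership form : if `C ≤ A` then `A ⊓ (B ⊔ C) ≤ (A ⊓ B) ⊔ C`. -/
theorem dedekind_mem {A B C : Subgroup G} [B.Normal] (hCA : C ≤ A) {x : G}
    (hxA : x ∈ A) (hxBC : x ∈ B ⊔ C) : x ∈ (A ⊓ B) ⊔ C := by
  rw [sup_comm] at hxBC
  obtain ⟨c, hc, b, hb, rfl⟩ := subgroup_mem_sup_normal hxBC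
  have hbA : b ∈ A := by
    have := mul_mem (inv_mem (hCA hc)) hxA
    rwa [inv_mul_cancel_left] at this
  exact Subgroup.mul_mem _ (Subgroup.mem_sup_right hc) (Subgroup.mem_sup_left ⟨hbA, hb⟩)

end SupHelpers

section Instantiations

variable (F : GroupClass) {G : Type} [Group G] [Finite G]

theorem fcentral_congr {R S R' S' : Subgroup G} [R.Normal] [S.Normal] [R'.Normal] [S'.Normal]
    (h1 : R = R') (h2 : S = S') : FCentralSection F R S → FCentralSection F R' S' := by
  subst h1; subst h2; exact id

/-- Second isomorphism : `A/(A ⊓ B)` is `F`-central iff `(A ⊔ B)/B` is. -/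
theorem fcentral_secondIso (hF : F.IsFormation) (A B : Subgroup G) [A.Normal] [B.Normal] :
    FCentralSection F A (A ⊓ B) ↔ FCentralSection F (A ⊔ B) B := by
  have h1 : ∀ r ∈ A, (MonoidHom.id G) r ∈ A ⊔ B := fun r hr => Subgroup.mem_sup_left hr
  have h2 : ∀ x ∈ A ⊔ B, ∃ r ∈ A, ((MonoidHom.id G) r)⁻¹ * x ∈ B := by
    intro x hx
    obtain ⟨a, ha, b, hb, rfl⟩ := subgroup_mem_sup_normal hx
    exact ⟨a, ha, by simpa using hb⟩
  have h3 : ∀ r ∈ A, ((MonoidHom.id G) r ∈ B ↔ r ∈ A ⊓ B) := by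
    intro r hr
    simp [Subgroup.mem_inf, hr]
  constructor
  · exact fcentral_transfer_fwd F hF (MonoidHom.id G) Function.surjective_id A (A ⊓ B)
      (A ⊔ B) B h1 h2 h3
  · exact fcentral_transfer_rev F hF (MonoidHom.id G) Function.surjective_id A (A ⊓ B)
      (A ⊔ B) B h1 h2 h3

/-- Quotient correspondence for `F`-central sections above `N`. -/
theorem fcentral_quot (hF : F.IsFormation) (N : Subgroup G) [N.Normal]
    (R S : Subgroup G) [R.Normal] [S.Normal] (hNS : N ≤ S) :
    haveI : (R.map (QuotientGroup.mk' N)).Normal :=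
      ‹R.Normal›.map _ (QuotientGroup.mk'_surjective N)
    haveI : (S.map (QuotientGroup.mk' N)).Normal :=
      ‹S.Normal›.map _ (QuotientGroup.mk'_surjective N)
    (FCentralSection F R S ↔
      FCentralSection F (R.map (QuotientGroup.mk' N)) (S.map (QuotientGroup.mk' N))) := by
  set π := QuotientGroup.mk' N with hπdef
  haveI : (R.map π).Normal := ‹R.Normal›.map _ (QuotientGroup.mk'_surjective N)
  haveI : (S.map π).Normal := ‹S.Normal›.map _ (QuotientGroup.mk'_surjective N)
  have h1 : ∀ r ∈ R, π r ∈ R.map π := fun r hr => Subgroup.mem_map_of_mem π hr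
  have h2 : ∀ x ∈ R.map π, ∃ r ∈ R, (π r)⁻¹ * x ∈ S.map π := by
    rintro _ ⟨r, hr, rfl⟩
    exact ⟨r, hr, by simpa using (S.map π).one_mem⟩
  have h3 : ∀ r ∈ R, (π r ∈ S.map π ↔ r ∈ S) := by
    intro r _
    constructor
    · intro h
      have : r ∈ (S.map π).comap π := h
      rw [Subgroup.comap_map_eq, QuotientGroup.ker_mk'] at this
      exact (sup_eq_left.mpr hNS) ▸ (sup_comm S N ▸ this)
    · exact fun h => Subgroup.mem_map_of_mem π h
  constructor
  · exact fcentral_transfer_fwd F hF π (QuotientGroup.mk'_surjective N) R S _ _ h1 h2 h3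
  · exact fcentral_transfer_rev F hF π (QuotientGroup.mk'_surjective N) R S _ _ h1 h2 h3

end Instantiations

section ChiefLemmas

variable {G G' : Type} [Group G] [Group G']

theorem chief_congr {H K H' K' : Subgroup G} (h1 : H = H') (h2 : K = K') :
    IsChiefFactor H K → IsChiefFactor H' K' := by subst h1; subst h2; exact id

theorem chiefFactor_inf (A B : Subgroup G) [A.Normal] [B.Normal]
    (h : IsChiefFactor (A ⊔ B) B) : IsChiefFactor A (A ⊓ B) := by
  obtain ⟨_, _, hlt, hmin⟩ := h
  refine ⟨inferInstance, inferInstance, ?_, ?_⟩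
  · refine lt_of_le_of_ne inf_le_left ?_
    intro heq
    have hAB : A ≤ B := heq ▸ inf_le_right
    rw [sup_eq_right.mpr hAB] at hlt
    exact lt_irrefl _ hlt
  · intro L hL hKL hLA
    rcases hmin (L ⊔ B) inferInstance le_sup_right
        (sup_le (le_trans hLA le_sup_left) le_sup_right) with hc | hc
    · left
      exact le_antisymm (le_inf hLA (le_trans le_sup_left (le_of_eq hc))) hKL
    · right
      refine le_antisymm hLA ?_
      intro a ha
      have haBL : a ∈ B ⊔ L := by
        rw [sup_comm]
        exact hc ▸ (Subgroup.mem_sup_left ha)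
      have := dedekind_mem hLA ha haBL
      rwa [sup_eq_right.mpr hKL] at this

theorem chiefFactor_sup (H K M : Subgroup G) [H.Normal] [K.Normal] [M.Normal]
    (h : IsChiefFactor H K) (hHM : H ⊓ M ≤ K) : IsChiefFactor (H ⊔ M) (K ⊔ M) := by
  obtain ⟨_, _, hlt, hmin⟩ := h
  refine ⟨inferInstance, inferInstance, ?_, ?_⟩
  · refine lt_of_le_of_ne (sup_le_sup_right hlt.le M) ?_
    intro heq
    have hHle : H ≤ K := by
      intro x hx
      have hxMK : x ∈ M ⊔ K := by
        rw [sup_comm]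
        exact heq ▸ (Subgroup.mem_sup_left hx : x ∈ H ⊔ M)
      have := dedekind_mem hlt.le hx hxMK
      rwa [sup_eq_right.mpr hHM] at this
    exact lt_irrefl _ (lt_of_lt_of_le hlt hHle)
  · intro L hL hKL hLH
    have hML : M ≤ L := le_trans le_sup_right hKL
    rcases hmin (L ⊓ H) inferInstance (le_inf (le_trans le_sup_left hKL) hlt.le)
        inf_le_right with hc | hc
    · left
      refine le_antisymm ?_ hKL
      intro x hx
      have := dedekind_mem hML hx (hLH hx)
      rwa [hc] at this
    · right
      exact le_antisymm hLH (sup_le (le_trans (le_of_eq hc.symm) inf_le_left) hML)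

theorem chiefFactor_comap (π : G →* G') (hπ : Function.Surjective π) (H' K' : Subgroup G')
    [hH' : H'.Normal] [hK' : K'.Normal] (h : IsChiefFactor H' K') :
    IsChiefFactor (H'.comap π) (K'.comap π) := by
  obtain ⟨_, _, hlt, hmin⟩ := h
  refine ⟨hH'.comap π, hK'.comap π, ?_, ?_⟩
  · refine lt_of_le_of_ne (Subgroup.comap_mono hlt.le) ?_
    intro heq
    have := congrArg (Subgroup.map π) heq
    rw [Subgroup.map_comap_eq_self_of_surjective hπ,
      Subgroup.map_comap_eq_self_of_surjective hπ] at this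
    exact hlt.ne this
  · intro L hL hKL hLH
    have hmapL : (L.map π).Normal := hL.map π hπ
    have h1 : K' ≤ L.map π := by
      have := Subgroup.map_mono (f := π) hKL
      rwa [Subgroup.map_comap_eq_self_of_surjective hπ] at this
    have h2 : L.map π ≤ H' := by
      have := Subgroup.map_mono (f := π) hLH
      rwa [Subgroup.map_comap_eq_self_of_surjective hπ] at this
    rcases hmin (L.map π) hmapL h1 h2 with hc | hc
    · left
      refine le_antisymm ?_ hKL
      refine le_trans (Subgroup.le_comap_map π L) ?_
      exact Subgroup.comap_mono (le_of_eq hc)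
    · right
      refine le_antisymm hLH ?_
      rw [← hc, Subgroup.comap_map_eq]
      refine sup_le le_rfl (le_trans ?_ hKL)
      intro x hx
      have : π x = 1 := hx
      simp only [Subgroup.mem_comap, this]
      exact K'.one_mem

theorem chiefFactor_map (π : G →* G') (hπ : Function.Surjective π) (H K : Subgroup G)
    [hH : H.Normal] [hK : K.Normal] (hker : π.ker ≤ K) (h : IsChiefFactor H K) :
    IsChiefFactor (H.map π) (K.map π) := by
  obtain ⟨_, _, hlt, hmin⟩ := h
  have hkerH : π.ker ≤ H := le_trans hker hlt.le
  refine ⟨hH.map π hπ, hK.map π hπ, ?_, ?_⟩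
  · refine lt_of_le_of_ne (Subgroup.map_mono hlt.le) ?_
    intro heq
    have := congrArg (Subgroup.comap π) heq
    rw [Subgroup.comap_map_eq, Subgroup.comap_map_eq, sup_eq_left.mpr hkerH,
      sup_eq_left.mpr hker] at this
    exact hlt.ne this
  · intro L' hL' hKL hLH
    have h1 : K ≤ L'.comap π := le_trans (Subgroup.le_comap_map π K) (Subgroup.comap_mono hKL)
    have h2 : L'.comap π ≤ H := by
      refine le_trans (Subgroup.comap_mono hLH) ?_
      rw [Subgroup.comap_map_eq, sup_eq_left.mpr hkerH]
    rcases hmin (L'.comap π) (hL'.comap π) h1 h2 with hc | hc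
    · left
      have := congrArg (Subgroup.map π) hc
      rwa [Subgroup.map_comap_eq_self_of_surjective hπ] at this
    · right
      have := congrArg (Subgroup.map π) hc
      rwa [Subgroup.map_comap_eq_self_of_surjective hπ] at this

end ChiefLemmas

section KeyCases

variable (F : GroupClass) {G : Type} [Group G] [Finite G]

theorem key_case1 (hF : F.IsFormation) (M M' H K : Subgroup G)
    [M.Normal] [H.Normal] [K.Normal] (hcf : IsChiefFactor H K)
    (hsup : (H ⊓ M) ⊔ K = H) (hM' : FHypercentralIn F M') (hMM' : M ≤ M') :
    FCentralSection F H K := by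
  have hchief2 : IsChiefFactor ((H ⊓ M) ⊔ K) K := chief_congr hsup.symm rfl hcf
  have hchief3 : IsChiefFactor (H ⊓ M) ((H ⊓ M) ⊓ K) := chiefFactor_inf (H ⊓ M) K hchief2
  have hcent : FCentralSection F (H ⊓ M) ((H ⊓ M) ⊓ K) :=
    hM'.2 (H ⊓ M) ((H ⊓ M) ⊓ K) hchief3 (le_trans inf_le_right hMM')
  have hcent2 := (fcentral_secondIso F hF (H ⊓ M) K).mp hcent
  exact fcentral_congr F hsup rfl hcent2

theorem key_case2 (hF : F.IsFormation) (N H K : Subgroup G)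
    [N.Normal] [H.Normal] [K.Normal] (hcf : IsChiefFactor H K)
    (hHN : H ⊓ N ≤ K) (M' : Subgroup (G ⧸ N)) (hM' : FHypercentralIn F M')
    (hle : (H ⊔ N).map (QuotientGroup.mk' N) ≤ M') : FCentralSection F H K := by
  set π := QuotientGroup.mk' N with hπdef
  have hπ : Function.Surjective π := QuotientGroup.mk'_surjective N
  have hchief' : IsChiefFactor (H ⊔ N) (K ⊔ N) := chiefFactor_sup H K N hcf hHN
  haveI : ((H ⊔ N).map π).Normal := (inferInstance : (H ⊔ N).Normal).map π hπ
  haveI : ((K ⊔ N).map π).Normal := (inferInstance : (K ⊔ N).Normal).map π hπ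
  have hchiefm : IsChiefFactor ((H ⊔ N).map π) ((K ⊔ N).map π) :=
    chiefFactor_map π hπ (H ⊔ N) (K ⊔ N)
      (by rw [hπdef, QuotientGroup.ker_mk']; exact le_sup_right) hchief'
  have hcent' := hM'.2 _ _ hchiefm hle
  have hcent2 : FCentralSection F (H ⊔ N) (K ⊔ N) :=
    (fcentral_quot F hF N (H ⊔ N) (K ⊔ N) le_sup_right).mpr hcent'
  have hHKN : H ⊓ (K ⊔ N) = K := by
    rcases hcf.2.2.2 (H ⊓ (K ⊔ N)) inferInstance
        (le_inf hcf.2.2.1.le le_sup_left) inf_le_left with hc | hc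
    · exact hc
    · exfalso
      have hHK : H ≤ K := by
        intro x hx
        have hx2 : x ∈ N ⊔ K := by
          rw [sup_comm]
          exact inf_eq_left.mp hc hx
        have := dedekind_mem hcf.2.2.1.le hx hx2
        rwa [sup_eq_right.mpr hHN] at this
      exact lt_irrefl _ (lt_of_lt_of_le hcf.2.2.1 hHK)
  have hsup2 : H ⊔ (K ⊔ N) = H ⊔ N := by
    rw [← sup_assoc, sup_eq_left.mpr hcf.2.2.1.le]
  have hcent3 : FCentralSection F (H ⊔ (K ⊔ N)) (K ⊔ N) :=
    fcentral_congr F hsup2.symm rfl hcent2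
  have hcent4 := (fcentral_secondIso F hF H (K ⊔ N)).mpr hcent3
  exact fcentral_congr F rfl hHKN hcent4

end KeyCases

section HypLemmas

variable (F : GroupClass) {G : Type} [Group G] [Finite G]

theorem hyp_bot : FHypercentralIn F (⊥ : Subgroup G) :=
  ⟨inferInstance, fun _ K hcf hH =>
    absurd (lt_of_lt_of_le hcf.2.2.1 hH) (by exact not_lt_bot)⟩

theorem hyp_map (hF : F.IsFormation) (N M : Subgroup G) [N.Normal]
    (hM : FHypercentralIn F M) : FHypercentralIn F (M.map (QuotientGroup.mk' N)) := by
  set π := QuotientGroup.mk' N with hπdef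
  have hπ : Function.Surjective π := QuotientGroup.mk'_surjective N
  haveI := hM.1
  refine ⟨hM.1.map π hπ, ?_⟩
  intro H' K' hcf' hle'
  haveI := hcf'.1
  haveI := hcf'.2.1
  set H := H'.comap π with hH
  set K := K'.comap π with hK
  have hchief : IsChiefFactor H K := chiefFactor_comap π hπ H' K' hcf'
  haveI := hchief.1
  haveI := hchief.2.1
  have hKH : K ≤ H := hchief.2.2.1.le
  have hNK : N ≤ K := by
    intro n hn
    show π n ∈ K'
    have : π n = 1 := (QuotientGroup.eq_one_iff n).mpr hn
    rw [this]
    exact K'.one_mem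
  have hHMN : H ≤ M ⊔ N := by
    have h2 := Subgroup.comap_mono (f := π) hle'
    refine le_trans h2 ?_
    rw [Subgroup.comap_map_eq, hπdef, QuotientGroup.ker_mk']
  rcases hchief.2.2.2 ((H ⊓ M) ⊔ K) inferInstance le_sup_right
      (sup_le inf_le_left hKH) with hc | hc
  · exfalso
    have hHK : H ≤ K := by
      intro x hx
      have hx2 : x ∈ M ⊔ N := hHMN hx
      have := dedekind_mem (le_trans hNK hKH) hx hx2
      refine (sup_le (le_sup_left.trans hc.le) hNK : (H ⊓ M) ⊔ N ≤ K) this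
    exact lt_irrefl _ (lt_of_lt_of_le hchief.2.2.1 hHK)
  · have hcent : FCentralSection F H K := key_case1 F hF M M H K hchief hc hM le_rfl
    have hcentm := (fcentral_quot F hF N H K hNK).mp hcent
    exact fcentral_congr F (Subgroup.map_comap_eq_self_of_surjective hπ H')
      (Subgroup.map_comap_eq_self_of_surjective hπ K') hcentm

theorem hyp_sup (hF : F.IsFormation) (M₁ M₂ : Subgroup G)
    (h1 : FHypercentralIn F M₁) (h2 : FHypercentralIn F M₂) :
    FHypercentralIn F (M₁ ⊔ M₂) := by
  haveI := h1.1
  haveI := h2.1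
  refine ⟨inferInstance, ?_⟩
  intro H K hcf hle
  haveI := hcf.1
  haveI := hcf.2.1
  rcases hcf.2.2.2 ((H ⊓ M₁) ⊔ K) inferInstance le_sup_right
      (sup_le inf_le_left hcf.2.2.1.le) with hc | hc
  · have hHM : H ⊓ M₁ ≤ K := le_sup_left.trans hc.le
    set π := QuotientGroup.mk' M₁ with hπdef
    refine key_case2 F hF M₁ H K hcf hHM (M₂.map π) (hyp_map F hF M₁ M₂ h2) ?_
    have hsle : H ⊔ M₁ ≤ M₂ ⊔ M₁ :=
      sup_le (le_trans hle (le_of_eq (sup_comm M₁ M₂))) le_sup_right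
    have hbot : M₁.map π = ⊥ := by
      rw [Subgroup.map_eq_bot_iff, hπdef, QuotientGroup.ker_mk']
    calc (H ⊔ M₁).map π ≤ (M₂ ⊔ M₁).map π := Subgroup.map_mono (f := π) hsle
      _ = M₂.map π ⊔ M₁.map π := Subgroup.map_sup M₂ M₁ π
      _ ≤ M₂.map π := by rw [hbot]; exact sup_le le_rfl bot_le
  · exact key_case1 F hF M₁ M₁ H K hcf hc h1 le_rfl

theorem le_fhypercentre {M : Subgroup G} (hM : FHypercentralIn F M) :
    M ≤ FHypercentre F G :=
  le_iSup₂ (f := fun (N : Subgroup G) (_ : FHypercentralIn F N) => N) M hM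

theorem hyp_hypercentre (hF : F.IsFormation) : FHypercentralIn F (FHypercentre F G) := by
  classical
  set S : Set (Subgroup G) := {M | FHypercentralIn F M} with hS
  have hne : S.Nonempty := ⟨⊥, hyp_bot F⟩
  have hfin : S.Finite := Set.toFinite S
  obtain ⟨M, hM, hmax⟩ := Set.Finite.exists_maximalFor id S hfin hne
  have hmax' : ∀ X ∈ S, X ≤ M := by
    intro X hX
    have h1 : X ⊔ M ∈ S := hyp_sup F hF X M hX hM
    have h2 := hmax h1 le_sup_right
    simp only [id] at h2
    exact le_trans le_sup_left h2
  have heq : FHypercentre F G = M := by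
    refine le_antisymm ?_ (le_fhypercentre F hM)
    exact iSup_le fun X => iSup_le fun hX => hmax' X hX
  rw [heq]
  exact hM

end HypLemmas
/-- **Lemma 4(ii).** Let `𝔉` be a hereditary formation and `N` a normal subgroup of the
finite group `G` with `N ≤ Z_𝔉(G)`. Then `Z_𝔉(G)/N = Z_𝔉(G/N)`. -/
theorem FHypercentre_quotient
    (F : GroupClass) (hF : F.IsFormation) (hHer : F.Hereditary)
    {G : Type} [Group G] [Finite G] (N : Subgroup G) [N.Normal]
    (hN : N ≤ FHypercentre F G) :
    (FHypercentre F G).map (QuotientGroup.mk' N) = FHypercentre F (G ⧸ N) := by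
  set π := QuotientGroup.mk' N with hπdef
  have hπ : Function.Surjective π := QuotientGroup.mk'_surjective N
  have hZ := hyp_hypercentre F (G := G) hF
  have hZ' := hyp_hypercentre F (G := G ⧸ N) hF
  apply le_antisymm
  · exact le_fhypercentre F (hyp_map F hF N (FHypercentre F G) hZ)
  · set W := (FHypercentre F (G ⧸ N)).comap π with hW
    haveI := hZ'.1
    have hNW : N ≤ W := by
      intro n hn
      show π n ∈ FHypercentre F (G ⧸ N)
      have hn1 : π n = 1 := (QuotientGroup.eq_one_iff n).mpr hn
      rw [hn1]
      exact Subgroup.one_mem _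
    have hWhyp : FHypercentralIn F W := by
      refine ⟨hZ'.1.comap π, ?_⟩
      intro H K hcf hle
      haveI := hcf.1
      haveI := hcf.2.1
      rcases hcf.2.2.2 ((H ⊓ N) ⊔ K) inferInstance le_sup_right
          (sup_le inf_le_left hcf.2.2.1.le) with hc | hc
      · have hHN : H ⊓ N ≤ K := le_sup_left.trans hc.le
        refine key_case2 F hF N H K hcf hHN (FHypercentre F (G ⧸ N)) hZ' ?_
        have h1 : H ⊔ N ≤ W := sup_le hle hNW
        exact le_trans (Subgroup.map_mono (f := π) h1) (Subgroup.map_comap_le π _)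
      · exact key_case1 F hF N (FHypercentre F G) H K hcf hc hZ hN
    calc FHypercentre F (G ⧸ N) = W.map π :=
        (Subgroup.map_comap_eq_self_of_surjective hπ _).symm
      _ ≤ (FHypercentre F G).map π := Subgroup.map_mono (f := π) (le_fhypercentre F hWhyp)
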